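/- For all p ∈ [4/3, 2], s ∈ [2, 4], and r ∈ [0, 1], the inequality p(1−r)(r^s−1)(r^s−r) + 2sr(r^{s−1}−r^{s+1}) + 2r(r^{2s}−1) ≤ 0 holds. -/

import Mathlib

open Real

/-- `tanh c ≤ c` for `c ≥ 0`, in the form `sinh c ≤ c * cosh c`. -/
lemma sinh_le_mul_cosh_aux {c : ℝ} (hc : 0 ≤ c) : Real.sinh c ≤ c * Real.cosh c := by
  have hmono : MonotoneOn (fun t : ℝ => t * Real.cosh t - Real.sinh t) (Set.Ici (0:ℝ)) := by
    have hderiv : ∀ t : ℝ, HasDerivAt (fun t : ℝ => t * Real.cosh t - Real.sinh t)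
        (t * Real.sinh t) t := by
      intro t
      have h1 := (hasDerivAt_id t).mul (Real.hasDerivAt_cosh t)
      have h2 := Real.hasDerivAt_sinh t
      have h3 := h1.sub h2
      convert h3 using 1
      · rfl
      · rfl
      · rfl
      · simp [id_eq]
    apply monotoneOn_of_deriv_nonneg (convex_Ici 0)
    · exact (Continuous.continuousOn (by fun_prop))
    · intro t _
      exact (hderiv t).differentiableAt.differentiableWithinAt
    · intro t ht
      rw [interior_Ici] at ht
      rw [(hderiv t).deriv]
      have ht' : (0:ℝ) < t := ht
      have hsp : 0 < Real.sinh t := Real.sinh_pos_iff.mpr ht'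
      positivity
  have h := hmono (Set.self_mem_Ici) (Set.mem_Ici.mpr hc) hc
  simpa using h

/-- `sinh t / t` is increasing: `(c+d) * sinh c ≤ c * sinh (c+d)`. -/
lemma sinh_div_mono {c d : ℝ} (hc : 0 ≤ c) (hd : 0 ≤ d) :
    (c + d) * Real.sinh c ≤ c * Real.sinh (c + d) := by
  have h1 : Real.sinh (c + d) = Real.sinh c * Real.cosh d + Real.cosh c * Real.sinh d :=
    Real.sinh_add c d
  have h2 : d ≤ Real.sinh d := Real.self_le_sinh_iff.mpr hd
  have h3 : (1:ℝ) ≤ Real.cosh d := Real.one_le_cosh d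
  have h4 : Real.sinh c ≤ c * Real.cosh c := sinh_le_mul_cosh_aux hc
  have h5 : 0 ≤ Real.sinh c := by
    rcases eq_or_lt_of_le hc with h | h
    · simp [← h]
    · exact (Real.sinh_pos_iff.mpr h).le
  have h6 : 0 < Real.cosh c := Real.cosh_pos c
  nlinarith [mul_le_mul_of_nonneg_left h2 (mul_nonneg hc h6.le),
    mul_le_mul_of_nonneg_left h3 (mul_nonneg hc h5),
    mul_le_mul_of_nonneg_right h4 hd]

theorem stmt_0 (p s r : ℝ) (hp : p ∈ Set.Icc (4/3 : ℝ) 2)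
    (hs : s ∈ Set.Icc (2 : ℝ) 4) (hr : r ∈ Set.Icc (0 : ℝ) 1) :
    p * (1 - r) * (r ^ s - 1) * (r ^ s - r)
      + 2 * s * r * (r ^ (s - 1) - r ^ (s + 1))
      + 2 * r * (r ^ (2 * s) - 1) ≤ 0 := by
  obtain ⟨hp1, hp2⟩ := hp
  obtain ⟨hs1, hs2⟩ := hs
  obtain ⟨hr0, hr1⟩ := hr
  rcases eq_or_lt_of_le hr0 with h0 | h0
  · -- r = 0
    have hs0 : s ≠ 0 := by linarith
    have hsm : s - 1 ≠ 0 := by intro h; nlinarith [h]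
    have hsp : s + 1 ≠ 0 := by intro h; nlinarith [h]
    have h2s : 2 * s ≠ 0 := by intro h; nlinarith [h]
    rw [← h0, Real.zero_rpow hs0, Real.zero_rpow hsm, Real.zero_rpow hsp, Real.zero_rpow h2s]
    norm_num
  rcases eq_or_lt_of_le hr1 with h1 | h1
  · -- r = 1
    rw [h1, Real.one_rpow, Real.one_rpow, Real.one_rpow, Real.one_rpow]
    norm_num
  -- 0 < r < 1
  set x := r ^ s with hxdef
  have hxpos : 0 < x := Real.rpow_pos_of_pos h0 s
  have hyx : r * r ^ (s - 1) = x := by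
    rw [hxdef, show s = 1 + (s - 1) by ring, Real.rpow_add h0, Real.rpow_one]
    rw [show 1 + (s - 1) - 1 = s - 1 by ring]
  have hsp1 : r ^ (s + 1) = x * r := by
    rw [hxdef, Real.rpow_add h0, Real.rpow_one]
  have h2s : r ^ (2 * s) = x * x := by
    rw [hxdef, two_mul, Real.rpow_add h0]
  -- key inequality via sinh
  have key : (s - 1) * x * (1 - r ^ 2) ≤ r ^ 2 - x ^ 2 := by
    set L : ℝ := -Real.log r with hLdef
    have hL : 0 < L := by
      have := Real.log_neg h0 h1
      simp [hLdef]; linarith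
    have hexpL : Real.exp L = r⁻¹ := by
      rw [hLdef, Real.exp_neg, Real.exp_log h0]
    have hexpL' : Real.exp (-L) = r := by
      rw [hLdef, neg_neg, Real.exp_log h0]
    set y : ℝ := r ^ (s - 1) with hydef
    have hypos : 0 < y := Real.rpow_pos_of_pos h0 _
    have hexp2 : Real.exp ((s - 1) * L) = y⁻¹ := by
      rw [hydef, Real.rpow_def_of_pos h0, ← Real.exp_neg]
      congr 1
      rw [hLdef]; ring
    have hexp2' : Real.exp (-((s - 1) * L)) = y := by
      rw [hydef, Real.rpow_def_of_pos h0]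
      congr 1
      rw [hLdef]; ring
    have hmono := sinh_div_mono hL.le (by nlinarith [hL] : (0:ℝ) ≤ (s - 2) * L)
    have hsum : L + (s - 2) * L = (s - 1) * L := by ring
    rw [hsum] at hmono
    rw [Real.sinh_eq, Real.sinh_eq, hexpL, hexpL', hexp2, hexp2'] at hmono
    -- hmono : (s-1)*L * ((r⁻¹ - r)/2) ≤ L * ((y⁻¹ - y)/2)
    have hdiv : (s - 1) * (r⁻¹ - r) ≤ y⁻¹ - y := by
      have h2 : L * ((s - 1) * (r⁻¹ - r)) ≤ L * (y⁻¹ - y) := by nlinarith [hmono]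
      exact le_of_mul_le_mul_left h2 hL
    have hxy : x = y * r := by
      rw [hydef, hxdef, show s = (s - 1) + 1 by ring, Real.rpow_add h0, Real.rpow_one]
      rw [show (s - 1) + 1 - 1 = s - 1 by ring]
    have h3 := mul_le_mul_of_nonneg_right hdiv
      (by positivity : (0:ℝ) ≤ r ^ 2 * y)
    have e1 : (s - 1) * (r⁻¹ - r) * (r ^ 2 * y) = (s - 1) * (y * r) * (1 - r ^ 2) := by
      field_simp
    have e2 : (y⁻¹ - y) * (r ^ 2 * y) = r ^ 2 - (y * r) ^ 2 := by
      field_simp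
    rw [e1, e2, ← hxy] at h3
    exact h3
  -- assemble
  have hxr : x ≤ r := by
    have := Real.rpow_le_rpow_of_exponent_ge h0 hr1 (by linarith : (1:ℝ) ≤ s)
    rwa [Real.rpow_one] at this
  have hx1 : x ≤ 1 := by linarith
  have hA : 0 ≤ (1 - r) * (x - 1) * (x - r) := by
    nlinarith [mul_nonneg (mul_nonneg (by linarith : (0:ℝ) ≤ 1 - r)
      (by linarith : (0:ℝ) ≤ 1 - x)) (by linarith : (0:ℝ) ≤ r - x)]
  have hmid : 2 * s * r * (r ^ (s - 1) - r ^ (s + 1)) = 2 * s * (x - x * r ^ 2) := by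
    rw [hsp1]
    linear_combination 2 * s * hyx
  rw [hmid, h2s]
  nlinarith [key, hA, mul_le_mul_of_nonneg_right (by linarith : p ≤ 2) hA,
    mul_nonneg (mul_nonneg (by linarith : (0:ℝ) ≤ 2 - p) hA) hA]
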